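/- arXiv:1007.4695 — 2 statements merged into one kernel-verified Lean document; each statement's English description precedes it below -/
import Mathlib

section
/- For all w1,w2,w3 ∈ G(d) one has ∇̃_{w1}(T_{w2}w3) − T_{∇̃_{w1}w2}w3 − T_{w2}(∇̃_{w1}w3) = 0; that is, the tensor T is parallel with respect to the connection ∇̃ (∇̃T = 0). -/
open Module

variable {H D : Type} [LieRing H] [LieAlgebra ℝ H] [FiniteDimensional ℝ H]
  [LieRing D] [LieAlgebra ℝ D] [FiniteDimensional ℝ D]

/-- `beta BD π x y` is the element `β(x,y)` of `h*` given by `a ↦ ⟨π(a)x, y⟩_d`. -/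
def beta (BD : LinearMap.BilinForm ℝ D) (π : H →ₗ[ℝ] D →ₗ[ℝ] D) (x y : D) : Dual ℝ H :=
  (BD.flip y).comp (π.flip x)

/-- The inverse of the isomorphism `ℓ : h → h*`, `ℓ(h) = ⟨h,·⟩_h`. -/
noncomputable def ellInv (BH : LinearMap.BilinForm ℝ H) (hBH : BH.Nondegenerate)
    (α : Dual ℝ H) : H :=
  (LinearMap.BilinForm.toDual BH hBH).symm α

/-- The tensor `T_{x₁+ℓ(h₁)}(x₂+ℓ(h₂)) = ½([x₁,x₂]_d + β(x₁,x₂) + π(h₁)x₂ − π(h₂)x₁)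
+ ℓ([h₁,h₂]_h)`. -/
noncomputable def Tmap (BH : LinearMap.BilinForm ℝ H) (hBH : BH.Nondegenerate)
    (BD : LinearMap.BilinForm ℝ D) (π : H →ₗ[ℝ] D →ₗ[ℝ] D)
    (u v : D × Dual ℝ H) : D × Dual ℝ H :=
  ((2⁻¹ : ℝ) • (⁅u.1, v.1⁆ + π (ellInv BH hBH u.2) v.1 - π (ellInv BH hBH v.2) u.1),
   (2⁻¹ : ℝ) • beta BD π u.1 v.1 + BH ⁅ellInv BH hBH u.2, ellInv BH hBH v.2⁆)

/-- The connection `∇̃ = T − ∇`: `∇̃_{x₁+ℓ(h₁)}(x₂+ℓ(h₂)) = π(h₁)x₂ + ℓ([h₁,h₂]_h)`. -/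
noncomputable def tnab (BH : LinearMap.BilinForm ℝ H) (hBH : BH.Nondegenerate)
    (π : H →ₗ[ℝ] D →ₗ[ℝ] D) (u v : D × Dual ℝ H) : D × Dual ℝ H :=
  (π (ellInv BH hBH u.2) v.1, BH ⁅ellInv BH hBH u.2, ellInv BH hBH v.2⁆)

/-- The homogeneous structure `T` is parallel for `∇̃`: `∇̃T = 0`. -/
theorem Tmap_parallel
    (BH : LinearMap.BilinForm ℝ H)
    (hBHsymm : ∀ a b : H, BH a b = BH b a)
    (hBHnd : BH.Nondegenerate)
    (hBHinv : ∀ a b c : H, BH ⁅a, b⁆ c = - BH b ⁅a, c⁆)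
    (BD : LinearMap.BilinForm ℝ D)
    (hBDsymm : ∀ x y : D, BD x y = BD y x)
    (hBDnd : BD.Nondegenerate)
    (hBDinv : ∀ x y z : D, BD ⁅x, y⁆ z = - BD y ⁅x, z⁆)
    (π : H →ₗ[ℝ] D →ₗ[ℝ] D)
    (hπder : ∀ a : H, ∀ x y : D, π a ⁅x, y⁆ = ⁅π a x, y⁆ + ⁅x, π a y⁆)
    (hπhom : ∀ a b : H, π ⁅a, b⁆ = π a ∘ₗ π b - π b ∘ₗ π a)
    (hπskew : ∀ a : H, ∀ x y : D, BD (π a x) y = - BD x (π a y)) :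
    ∀ w₁ w₂ w₃ : D × Dual ℝ H,
      tnab BH hBHnd π w₁ (Tmap BH hBHnd BD π w₂ w₃)
        - Tmap BH hBHnd BD π (tnab BH hBHnd π w₁ w₂) w₃
        - Tmap BH hBHnd BD π w₂ (tnab BH hBHnd π w₁ w₃) = 0 := by
  rintro ⟨x₁, α₁⟩ ⟨x₂, α₂⟩ ⟨x₃, α₃⟩
  set e := LinearMap.BilinForm.toDual BH hBHnd with he
  have hsymm : ∀ c : H, ellInv BH hBHnd (BH c) = c := fun c => e.symm_apply_apply c
  have happ : ∀ (α : Dual ℝ H) (a : H), BH (ellInv BH hBHnd α) a = α a := fun α a =>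
    LinearMap.BilinForm.apply_toDual_symm_apply α a
  set h₁ := ellInv BH hBHnd α₁ with hh₁
  set h₂ := ellInv BH hBHnd α₂ with hh₂
  set h₃ := ellInv BH hBHnd α₃ with hh₃
  set b₂₃ := ellInv BH hBHnd (beta BD π x₂ x₃) with hb₂₃
  have hlin : ellInv BH hBHnd ((2⁻¹ : ℝ) • beta BD π x₂ x₃ + BH ⁅h₂, h₃⁆)
      = (2⁻¹ : ℝ) • b₂₃ + ⁅h₂, h₃⁆ := by
    show (LinearMap.BilinForm.toDual BH hBHnd).symm _ = _
    rw [map_add, map_smul,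
      show (LinearMap.BilinForm.toDual BH hBHnd).symm (BH ⁅h₂, h₃⁆) = ⁅h₂, h₃⁆ from
        hsymm ⁅h₂, h₃⁆]
    rfl
  simp only [tnab, Tmap, hlin, hsymm]
  simp only [← hh₁, ← hh₂, ← hh₃]
  rw [Prod.ext_iff]
  constructor
  · -- D component
    simp only [Prod.fst_sub, Prod.fst_zero, map_smul, map_add, map_sub, LinearMap.smul_apply,
      LinearMap.add_apply, LinearMap.sub_apply]
    rw [hπder h₁ x₂ x₃, hπhom h₁ h₂, hπhom h₁ h₃]
    simp only [LinearMap.sub_apply, LinearMap.comp_apply]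
    module
  · -- Dual component
    ext a
    simp only [Prod.snd_sub, Prod.snd_zero, LinearMap.sub_apply, LinearMap.add_apply,
      LinearMap.smul_apply, LinearMap.zero_apply, smul_eq_mul]
    have jac : ⁅h₁, ⁅h₂, h₃⁆⁆ = ⁅⁅h₁, h₂⁆, h₃⁆ + ⁅h₂, ⁅h₁, h₃⁆⁆ := leibniz_lie h₁ h₂ h₃
    have hbeta : ∀ x y : D, beta BD π x y a = BD (π a x) y := fun x y => rfl
    have key : BH ⁅h₁, b₂₃⁆ a = BD (π a (π h₁ x₂)) x₃ - BD (π h₁ (π a x₂)) x₃ := by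
      rw [hBHinv h₁ b₂₃ a, hb₂₃, happ]
      have hb : beta BD π x₂ x₃ ⁅h₁, a⁆ = BD (π ⁅h₁, a⁆ x₂) x₃ := rfl
      rw [hb, hπhom h₁ a]
      simp only [LinearMap.sub_apply, LinearMap.comp_apply, map_sub]
      ring
    have skew2 : BD (π a x₂) (π h₁ x₃) = - BD (π h₁ (π a x₂)) x₃ := by
      rw [hπskew h₁ (π a x₂) x₃]; ring
    have expand : BH ⁅h₁, (2⁻¹:ℝ) • b₂₃ + ⁅h₂, h₃⁆⁆ a
        = 2⁻¹ * BH ⁅h₁, b₂₃⁆ a + BH ⁅⁅h₁, h₂⁆, h₃⁆ a + BH ⁅h₂, ⁅h₁, h₃⁆⁆ a := by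
      rw [lie_add, lie_smul, jac]
      simp only [map_add, map_smul, LinearMap.add_apply, LinearMap.smul_apply, smul_eq_mul]
      ring
    rw [hlin, expand, key, hbeta, hbeta, skew2]
    ring
end

section
/- Write C^0(a) = a, C^i(a) = [C^{i-1}(a), C^{i-1}(a)] for the derived series of a Lie algebra a. Then: (i) for every i ≥ 1, C^i(G(d)) ⊆ C^i(d) ⊕ h*; (ii) if d is solvable with C^k(d) = 0, then C^{k+1}(G(d)) = 0, so G(d) is solvable of step at most k+1; (iii) under the hypothesis C^k(d) = 0, one has C^k(G(d)) = 0 if and only if ⟨π(h)x, y⟩_d = 0 for all h ∈ h and all x,y ∈ C^{k-1}(d). -/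
open Module

variable {H D : Type} [LieRing H] [LieAlgebra ℝ H] [FiniteDimensional ℝ H]
  [LieRing D] [LieAlgebra ℝ D] [FiniteDimensional ℝ D]

/-- The bracket on `G(d) = d ⊕ h*`: `[x₁+α₁, x₂+α₂] = [x₁,x₂]_d + β(x₁,x₂)`. -/
def gbr (BD : LinearMap.BilinForm ℝ D) (π : H →ₗ[ℝ] D →ₗ[ℝ] D)
    (u v : D × Dual ℝ H) : D × Dual ℝ H :=
  (⁅u.1, v.1⁆, beta BD π u.1 v.1)

/-- The subspace spanned by all brackets `br u v`, `u ∈ S`, `v ∈ T`. -/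
def bspan {X : Type} [AddCommGroup X] [Module ℝ X] (br : X → X → X)
    (S T : Submodule ℝ X) : Submodule ℝ X :=
  Submodule.span ℝ {z | ∃ u ∈ S, ∃ v ∈ T, z = br u v}

/-- The derived series: `C⁰(a) = a`, `Cⁱ(a) = [Cⁱ⁻¹(a), Cⁱ⁻¹(a)]`. -/
def dsF {X : Type} [AddCommGroup X] [Module ℝ X] (br : X → X → X) : ℕ → Submodule ℝ X
  | 0 => ⊤
  | (i + 1) => bspan br (dsF br i) (dsF br i)

lemma gbr_fst_le (BD : LinearMap.BilinForm ℝ D) (π : H →ₗ[ℝ] D →ₗ[ℝ] D) :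
    ∀ i : ℕ, (dsF (gbr BD π) i).map (LinearMap.fst ℝ D (Dual ℝ H)) ≤
      dsF (fun x y : D => ⁅x, y⁆) i := by
  intro i
  induction i with
  | zero => exact le_top
  | succ i ih =>
    show ((bspan _ _ _).map _) ≤ bspan _ _ _
    rw [bspan, Submodule.map_span, Submodule.span_le]
    rintro z ⟨w, ⟨u, hu, v, hv, rfl⟩, rfl⟩
    apply Submodule.subset_span
    exact ⟨u.1, ih ⟨u, hu, rfl⟩, v.1, ih ⟨v, hv, rfl⟩, rfl⟩

lemma le_gbr_fst (BD : LinearMap.BilinForm ℝ D) (π : H →ₗ[ℝ] D →ₗ[ℝ] D) :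
    ∀ i : ℕ, dsF (fun x y : D => ⁅x, y⁆) i ≤
      (dsF (gbr BD π) i).map (LinearMap.fst ℝ D (Dual ℝ H)) := by
  intro i
  induction i with
  | zero => exact fun x _ => ⟨(x, 0), trivial, rfl⟩
  | succ i ih =>
    show bspan _ _ _ ≤ _
    rw [bspan, Submodule.span_le]
    rintro z ⟨x, hx, y, hy, rfl⟩
    obtain ⟨u, hu, rfl⟩ := ih hx
    obtain ⟨v, hv, rfl⟩ := ih hy
    exact ⟨gbr BD π u v, Submodule.subset_span ⟨u, hu, v, hv, rfl⟩, rfl⟩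

/-- Solvability of `G(d)`: `Cⁱ(G(d)) ⊆ Cⁱ(d) ⊕ h*`; if `d` is `k`-step solvable then
`G(d)` is at most `(k+1)`-step solvable, and it is `k`-step solvable iff
`⟨π(h)x, y⟩_d = 0` for all `h ∈ h` and `x, y ∈ C^{k-1}(d)`. -/
theorem Gd_solvability
    (BH : LinearMap.BilinForm ℝ H)
    (hBHsymm : ∀ a b : H, BH a b = BH b a)
    (hBHnd : BH.Nondegenerate)
    (hBHinv : ∀ a b c : H, BH ⁅a, b⁆ c = - BH b ⁅a, c⁆)
    (BD : LinearMap.BilinForm ℝ D)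
    (hBDsymm : ∀ x y : D, BD x y = BD y x)
    (hBDnd : BD.Nondegenerate)
    (hBDinv : ∀ x y z : D, BD ⁅x, y⁆ z = - BD y ⁅x, z⁆)
    (π : H →ₗ[ℝ] D →ₗ[ℝ] D)
    (hπder : ∀ a : H, ∀ x y : D, π a ⁅x, y⁆ = ⁅π a x, y⁆ + ⁅x, π a y⁆)
    (hπhom : ∀ a b : H, π ⁅a, b⁆ = π a ∘ₗ π b - π b ∘ₗ π a)
    (hπskew : ∀ a : H, ∀ x y : D, BD (π a x) y = - BD x (π a y)) :
    -- (i) Cⁱ(G(d)) ⊆ Cⁱ(d) ⊕ h* for i ≥ 1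
    (∀ i : ℕ, 1 ≤ i →
      dsF (gbr BD π) i ≤ (dsF (fun x y : D => ⁅x, y⁆) i).prod (⊤ : Submodule ℝ (Dual ℝ H))) ∧
    -- (ii) if Cᵏ(d) = 0 then C^{k+1}(G(d)) = 0
    (∀ k : ℕ, dsF (fun x y : D => ⁅x, y⁆) k = ⊥ → dsF (gbr BD π) (k + 1) = ⊥) ∧
    -- (iii) if Cᵏ(d) = 0 (k ≥ 1) then Cᵏ(G(d)) = 0 ↔ ⟨π(h)x,y⟩_d = 0 for all h ∈ h,
    -- x, y ∈ C^{k-1}(d)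
    (∀ k : ℕ, 1 ≤ k → dsF (fun x y : D => ⁅x, y⁆) k = ⊥ →
      (dsF (gbr BD π) k = ⊥ ↔
        ∀ a : H, ∀ x ∈ dsF (fun x y : D => ⁅x, y⁆) (k - 1),
          ∀ y ∈ dsF (fun x y : D => ⁅x, y⁆) (k - 1), BD (π a x) y = 0)) := by

  have hfst := gbr_fst_le BD π
  have hsurj := le_gbr_fst BD π
  refine ⟨?_, ?_, ?_⟩
  · intro i _ u hu
    refine Submodule.mem_prod.2 ⟨?_, trivial⟩
    exact hfst i ⟨u, hu, rfl⟩
  · intro k hk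
    rw [eq_bot_iff]
    show bspan _ _ _ ≤ ⊥
    rw [bspan, Submodule.span_le]
    rintro z ⟨u, hu, v, hv, rfl⟩
    have hu1 : u.1 = 0 := by
      have := hfst k ⟨u, hu, rfl⟩
      rw [hk] at this; exact this
    have : gbr BD π u v = 0 := by
      unfold gbr beta
      rw [hu1]
      ext <;> simp
    simp [this]
  · intro k hk1 hk
    obtain ⟨m, rfl⟩ := Nat.exists_eq_add_of_le hk1
    simp only [Nat.add_sub_cancel_left] at *
    have hm : 1 + m = m + 1 := Nat.add_comm 1 m
    rw [hm] at hk ⊢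
    constructor
    · intro hGd a x hx y hy
      obtain ⟨u, hu, rfl⟩ := hsurj m hx
      obtain ⟨v, hv, rfl⟩ := hsurj m hy
      have hmem : gbr BD π u v ∈ dsF (gbr BD π) (m + 1) :=
        Submodule.subset_span ⟨u, hu, v, hv, rfl⟩
      rw [hGd, Submodule.mem_bot] at hmem
      have h2 : beta BD π u.1 v.1 = 0 := congrArg Prod.snd hmem
      simpa [beta] using LinearMap.congr_fun h2 a
    · intro hb
      rw [eq_bot_iff]
      show bspan _ _ _ ≤ ⊥
      rw [bspan, Submodule.span_le]
      rintro z ⟨u, hu, v, hv, rfl⟩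
      have hu1 : u.1 ∈ dsF (fun x y : D => ⁅x, y⁆) m := hfst m ⟨u, hu, rfl⟩
      have hv1 : v.1 ∈ dsF (fun x y : D => ⁅x, y⁆) m := hfst m ⟨v, hv, rfl⟩
      have h1 : ⁅u.1, v.1⁆ = 0 := by
        have : ⁅u.1, v.1⁆ ∈ dsF (fun x y : D => ⁅x, y⁆) (m + 1) :=
          Submodule.subset_span ⟨u.1, hu1, v.1, hv1, rfl⟩
        rwa [hk, Submodule.mem_bot] at this
      have h2 : beta BD π u.1 v.1 = 0 := by
        ext a
        simpa [beta] using hb a u.1 hu1 v.1 hv1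
      simp [gbr, h1, h2, Prod.ext_iff]
end
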